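/- Let $f,g$ be rearranged (radially symmetric nonincreasing) integrable functions on $\mathbb{R}^N$ with $f\prec g$, i.e. $\int_{B_R} f \le \int_{B_R} g$ for all $R>0$. Then $\|f\|_{L^p(\mathbb{R}^N)} \le \|g\|_{L^p(\mathbb{R}^N)}$ for every $p\in[1,\infty]$. -/

import Mathlib

open MeasureTheory Metric Set intervalIntegral
open scoped ENNReal

lemma vol_zero {N : ℕ} (hN : 1 ≤ N) : volume ({0} : Set (EuclideanSpace ℝ (Fin N))) = 0 := by
  rw [← closedBall_zero (x := (0 : EuclideanSpace ℝ (Fin N)))]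
  rw [Measure.addHaar_closedBall _ _ le_rfl]
  simp [finrank_euclideanSpace_fin, zero_pow (by omega : N ≠ 0)]

lemma radial_meas {N : ℕ} (hN : 1 ≤ N) (f : EuclideanSpace ℝ (Fin N) → ℝ)
    (hfr : ∀ x y : EuclideanSpace ℝ (Fin N), ‖x‖ ≤ ‖y‖ → f y ≤ f x) : Measurable f := by
  set e : EuclideanSpace ℝ (Fin N) := EuclideanSpace.single ⟨0, hN⟩ 1 with he
  have hne : ‖e‖ = 1 := by simp [he]
  set φ : ℝ → ℝ := fun r => f ((max r 0) • e) with hφ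
  have hanti : Antitone φ := by
    intro a b hab
    apply hfr
    simp only [norm_smul, hne, mul_one, Real.norm_eq_abs,
      abs_of_nonneg (le_max_right a 0), abs_of_nonneg (le_max_right b 0)]
    exact max_le_max hab le_rfl
  have hfe : f = φ ∘ norm := by
    funext x
    have h1 : ‖(max ‖x‖ 0) • e‖ = ‖x‖ := by
      simp [norm_smul, hne, abs_of_nonneg (le_max_right ‖x‖ 0), max_eq_left (norm_nonneg x)]
    exact le_antisymm (hfr _ _ h1.le) (hfr _ _ h1.ge)
  rw [hfe]
  exact hanti.measurable.comp measurable_norm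

lemma concA {N : ℕ} (hN : 1 ≤ N)
    (f g : EuclideanSpace ℝ (Fin N) → ℝ)
    (hfi : Integrable f volume) (hgi : Integrable g volume)
    (hf0 : ∀ x, 0 ≤ f x) (hg0 : ∀ x, 0 ≤ g x)
    (hfr : ∀ x y : EuclideanSpace ℝ (Fin N), ‖x‖ ≤ ‖y‖ → f y ≤ f x)
    (hconc : ∀ R > (0:ℝ),
      ∫ x in ball (0 : EuclideanSpace ℝ (Fin N)) R, f x ≤
        ∫ x in ball (0 : EuclideanSpace ℝ (Fin N)) R, g x)
    (t : ℝ) (ht : 0 < t) :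
    ∫⁻ x, ENNReal.ofReal (max (f x - t) 0) ≤ ∫⁻ x, ENNReal.ofReal (max (g x - t) 0) := by
  haveI : Nonempty (Fin N) := ⟨⟨0, hN⟩⟩
  by_cases hS : ∃ x : EuclideanSpace ℝ (Fin N), x ≠ 0 ∧ t < f x
  · obtain ⟨x0, hx0ne, hx0⟩ := hS
    set S : Set (EuclideanSpace ℝ (Fin N)) := {x | t < f x} with hSdef
    -- boundedness of S
    set B : ℝ := (volume (ball (0:EuclideanSpace ℝ (Fin N)) 1)).toReal with hBdef
    have hBpos : 0 < B := ENNReal.toReal_pos (measure_ball_pos _ _ one_pos).ne'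
      measure_ball_lt_top.ne
    set M : ℝ := max 1 ((∫ x, f x) / (t * B)) with hMdef
    have hbd : ∀ x : EuclideanSpace ℝ (Fin N), t < f x → ‖x‖ ≤ M := by
      intro x hx
      rcases le_or_gt ‖x‖ 1 with h1 | h1
      · exact h1.trans (le_max_left _ _)
      · have hvol : volume (ball (0:EuclideanSpace ℝ (Fin N)) ‖x‖) =
            ENNReal.ofReal (‖x‖ ^ N) * volume (ball (0:EuclideanSpace ℝ (Fin N)) 1) := by
          rw [Measure.addHaar_ball _ _ (norm_nonneg x), finrank_euclideanSpace_fin]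
        have hvt : (volume (ball (0:EuclideanSpace ℝ (Fin N)) ‖x‖)).toReal = ‖x‖ ^ N * B := by
          rw [hvol, ENNReal.toReal_mul, ENNReal.toReal_ofReal (by positivity), hBdef]
        have hkey : t * (‖x‖ ^ N * B) ≤ ∫ y, f y := by
          have h2 : ∫ y in ball (0:EuclideanSpace ℝ (Fin N)) ‖x‖, t ≤ ∫ y in ball (0:EuclideanSpace ℝ (Fin N)) ‖x‖, f y := by
            apply setIntegral_mono_on (integrableOn_const measure_ball_lt_top.ne)
              hfi.integrableOn measurableSet_ball
            intro y hy
            exact (hx.trans_le (hfr y x (mem_ball_zero_iff.1 hy).le)).le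
          rw [setIntegral_const, measureReal_def, hvt, smul_eq_mul] at h2
          calc t * (‖x‖ ^ N * B) = ‖x‖ ^ N * B * t := by ring
            _ ≤ ∫ y in ball (0:EuclideanSpace ℝ (Fin N)) ‖x‖, f y := h2
            _ ≤ ∫ y, f y := setIntegral_le_integral hfi (ae_of_all _ hf0)
        have hN' : ‖x‖ ^ N ≤ (∫ y, f y) / (t * B) := by
          rw [le_div_iff₀ (by positivity)]
          calc ‖x‖ ^ N * (t * B) = t * (‖x‖ ^ N * B) := by ring
            _ ≤ _ := hkey
        calc ‖x‖ ≤ ‖x‖ ^ N := le_self_pow₀ h1.le (by omega)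
          _ ≤ _ := hN'
          _ ≤ M := le_max_right _ _
    have hbdd : BddAbove (norm '' S) := ⟨M, by rintro r ⟨x, hx, rfl⟩; exact hbd x hx⟩
    have hne : (norm '' S).Nonempty := ⟨‖x0‖, x0, hx0, rfl⟩
    set ρ : ℝ := sSup (norm '' S) with hρdef
    have hρpos : 0 < ρ :=
      lt_of_lt_of_le (norm_pos_iff.2 hx0ne) (le_csSup hbdd ⟨x0, hx0, rfl⟩)
    have hball : ball (0:EuclideanSpace ℝ (Fin N)) ρ ⊆ S := by
      intro y hy
      obtain ⟨r, ⟨x, hxS, rfl⟩, hr⟩ := exists_lt_of_lt_csSup hne (mem_ball_zero_iff.1 hy)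
      exact lt_of_lt_of_le hxS (hfr y x hr.le)
    have hSsub : ∀ x ∈ S, ‖x‖ ≤ ρ := fun x hx => le_csSup hbdd ⟨x, hx, rfl⟩
    -- a.e. identification of the integrand with an indicator
    have hsph : volume (sphere (0:EuclideanSpace ℝ (Fin N)) ρ) = 0 := Measure.addHaar_sphere _ _ _
    have hae : (fun x => ENNReal.ofReal (max (f x - t) 0)) =ᵐ[volume]
        (ball (0:EuclideanSpace ℝ (Fin N)) ρ).indicator fun x => ENNReal.ofReal (f x - t) := by
      have h0 : ∀ᵐ x : EuclideanSpace ℝ (Fin N), x ∉ sphere (0:EuclideanSpace ℝ (Fin N)) ρ :=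
        measure_eq_zero_iff_ae_notMem.mp hsph
      filter_upwards [h0] with x hx
      by_cases hxb : x ∈ ball (0:EuclideanSpace ℝ (Fin N)) ρ
      · have : t < f x := hball hxb
        rw [indicator_of_mem hxb, max_eq_left (sub_nonneg.2 this.le)]
      · have hxn : ρ < ‖x‖ := by
          rcases lt_or_ge ρ ‖x‖ with h | h
          · exact h
          · rcases h.lt_or_eq with h | h
            · exact absurd (mem_ball_zero_iff.2 h) hxb
            · exact absurd (mem_sphere_zero_iff_norm.2 h) hx
        have : f x ≤ t := by
          by_contra hc
          exact absurd (hSsub x (lt_of_not_ge hc)) hxn.not_ge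
        rw [indicator_of_notMem hxb, max_eq_right (sub_nonpos.2 this), ENNReal.ofReal_zero]
    rw [lintegral_congr_ae hae, lintegral_indicator measurableSet_ball _]
    have hfint : IntegrableOn (fun x => f x - t) (ball (0:EuclideanSpace ℝ (Fin N)) ρ) volume :=
      hfi.integrableOn.sub (integrableOn_const measure_ball_lt_top.ne)
    have hnn : 0 ≤ᵐ[volume.restrict (ball (0:EuclideanSpace ℝ (Fin N)) ρ)] fun x => f x - t :=
      (ae_restrict_iff' measurableSet_ball).2
        (ae_of_all _ fun x hx => sub_nonneg.2 (hball hx).le)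
    rw [← ofReal_integral_eq_lintegral_ofReal hfint hnn]
    have hgm : Integrable (fun x => max (g x - t) 0) volume := by
      refine Integrable.mono hgi (((hgi.aestronglyMeasurable.aemeasurable.sub
        aemeasurable_const).max aemeasurable_const).aestronglyMeasurable) (ae_of_all _ fun x => ?_)
      rw [Real.norm_eq_abs, Real.norm_eq_abs, abs_of_nonneg (le_max_right _ _),
        abs_of_nonneg (hg0 x)]
      rcases le_or_gt (g x - t) 0 with h | h
      · rw [max_eq_right h]; exact hg0 x
      · rw [max_eq_left h.le]; linarith
    rw [← ofReal_integral_eq_lintegral_ofReal hgm (ae_of_all _ fun x => le_max_right _ _)]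
    apply ENNReal.ofReal_le_ofReal
    have hgint : IntegrableOn (fun x => g x - t) (ball (0:EuclideanSpace ℝ (Fin N)) ρ) volume :=
      hgi.integrableOn.sub (integrableOn_const measure_ball_lt_top.ne)
    calc ∫ x in ball (0:EuclideanSpace ℝ (Fin N)) ρ, (f x - t)
        = (∫ x in ball (0:EuclideanSpace ℝ (Fin N)) ρ, f x) - (∫ x in ball (0:EuclideanSpace ℝ (Fin N)) ρ, t) :=
          integral_sub hfi.integrableOn (integrableOn_const measure_ball_lt_top.ne)
      _ ≤ (∫ x in ball (0:EuclideanSpace ℝ (Fin N)) ρ, g x) - (∫ x in ball (0:EuclideanSpace ℝ (Fin N)) ρ, t) := by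
          have := hconc ρ hρpos; linarith
      _ = ∫ x in ball (0:EuclideanSpace ℝ (Fin N)) ρ, (g x - t) :=
          (integral_sub hgi.integrableOn (integrableOn_const measure_ball_lt_top.ne)).symm
      _ ≤ ∫ x in ball (0:EuclideanSpace ℝ (Fin N)) ρ, max (g x - t) 0 :=
          setIntegral_mono_on hgint hgm.integrableOn measurableSet_ball
            (fun x _ => le_max_left _ _)
      _ ≤ ∫ x, max (g x - t) 0 :=
          setIntegral_le_integral hgm (ae_of_all _ fun x => le_max_right _ _)
  · push_neg at hS
    have hz : (fun x : EuclideanSpace ℝ (Fin N) => ENNReal.ofReal (max (f x - t) 0)) =ᵐ[volume] fun _ => 0 := by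
      have h0 : ∀ᵐ x : EuclideanSpace ℝ (Fin N), x ∉ ({0} : Set (EuclideanSpace ℝ (Fin N))) :=
        measure_eq_zero_iff_ae_notMem.mp (vol_zero hN)
      filter_upwards [h0] with x hx
      rw [max_eq_right (sub_nonpos.2 (hS x hx)), ENNReal.ofReal_zero]
    rw [lintegral_congr_ae hz, lintegral_zero]
    exact zero_le

lemma layer (q : ℝ) (hq : 1 < q) (s : ℝ) (hs : 0 ≤ s) :
    ∫⁻ t in Set.Ioi (0:ℝ), ENNReal.ofReal (max (s - t) 0 * t ^ (q-2)) =
      ENNReal.ofReal (s ^ q / (q * (q-1))) := by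
  rcases hs.eq_or_lt with rfl | hs'
  · rw [Real.zero_rpow (by positivity), zero_div, ENNReal.ofReal_zero]
    rw [← lintegral_zero (μ := volume.restrict (Set.Ioi (0:ℝ)))]
    apply setLIntegral_congr_fun measurableSet_Ioi
    intro t ht
    dsimp only
    rw [max_eq_right (by simp [le_of_lt (mem_Ioi.1 ht)]), zero_mul, ENNReal.ofReal_zero]
  · have hQ0 : (0:ℝ) < q := by linarith
    have hQ1 : (0:ℝ) < q - 1 := by linarith
    have hsplit : Set.Ioi (0:ℝ) = Set.Ioc 0 s ∪ Set.Ioi s := (Set.Ioc_union_Ioi_eq_Ioi hs).symm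
    rw [hsplit, lintegral_union measurableSet_Ioi (Set.Ioc_disjoint_Ioi le_rfl)]
    have hb : ∫⁻ t in Set.Ioi s, ENNReal.ofReal (max (s - t) 0 * t ^ (q-2)) = 0 := by
      rw [← lintegral_zero (μ := volume.restrict (Set.Ioi s))]
      apply setLIntegral_congr_fun measurableSet_Ioi (fun t ht => ?_)
      rw [max_eq_right (by simp [le_of_lt (mem_Ioi.1 ht)]), zero_mul, ENNReal.ofReal_zero]
    rw [hb, add_zero]
    -- integrability on Ioc 0 s
    have hii : IntervalIntegrable (fun t => s * t ^ (q-2) - t ^ (q-1)) volume 0 s :=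
      ((intervalIntegrable_rpow' (by linarith)).const_mul s).sub
        (intervalIntegrable_rpow' (by linarith))
    have hio : IntegrableOn (fun t => s * t ^ (q-2) - t ^ (q-1)) (Set.Ioc 0 s) volume :=
      (intervalIntegrable_iff_integrableOn_Ioc_of_le hs).1 hii
    have heq : ∀ t ∈ Set.Ioc (0:ℝ) s,
        max (s - t) 0 * t ^ (q-2) = s * t ^ (q-2) - t ^ (q-1) := by
      intro t ht
      rw [max_eq_left (by linarith [ht.2])]
      have : t ^ (q-1) = t ^ (q-2) * t := by
        rw [show q - 1 = (q-2) + 1 by ring, Real.rpow_add ht.1, Real.rpow_one]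
      rw [this]; ring
    have hio' : IntegrableOn (fun t => max (s - t) 0 * t ^ (q-2)) (Set.Ioc 0 s) volume :=
      hio.congr_fun (fun t ht => (heq t ht).symm) measurableSet_Ioc
    have hnn : 0 ≤ᵐ[volume.restrict (Set.Ioc 0 s)] fun t => max (s - t) 0 * t ^ (q-2) := by
      refine (ae_restrict_iff' measurableSet_Ioc).2 (ae_of_all _ fun t ht => ?_)
      have := ht.1
      positivity
    rw [← ofReal_integral_eq_lintegral_ofReal hio' hnn]
    congr 1
    rw [setIntegral_congr_fun measurableSet_Ioc heq,
      ← intervalIntegral.integral_of_le hs,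
      intervalIntegral.integral_sub ((intervalIntegrable_rpow' (by linarith)).const_mul s)
        (intervalIntegrable_rpow' (by linarith)),
      intervalIntegral.integral_const_mul, integral_rpow (Or.inl (by linarith)),
      integral_rpow (Or.inl (by linarith))]
    rw [Real.zero_rpow (ne_of_gt (by linarith)), Real.zero_rpow (ne_of_gt (by linarith))]
    have h1 : q - 2 + 1 = q - 1 := by ring
    have h2 : q - 1 + 1 = q := by ring
    rw [h1, h2]
    have h3 : s * s ^ (q-1) = s ^ q := by
      have := (Real.rpow_add hs' 1 (q-1)).symm
      rw [Real.rpow_one] at this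
      rw [this, show (1:ℝ) + (q-1) = q by ring]
    rw [sub_zero, sub_zero, ← mul_div_assoc, h3]
    field_simp
    ring

lemma rep {N : ℕ} (f : EuclideanSpace ℝ (Fin N) → ℝ) (hf0 : ∀ x, 0 ≤ f x)
    (hfm : Measurable f) (q : ℝ) (hq : 1 < q) :
    ∫⁻ x, ENNReal.ofReal (f x) ^ q =
      ENNReal.ofReal (q*(q-1)) * ∫⁻ t in Set.Ioi (0:ℝ),
        (∫⁻ x, ENNReal.ofReal (max (f x - t) 0)) * ENNReal.ofReal (t^(q-2)) := by
  have hqq : 0 < q*(q-1) := by nlinarith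
  have h1 : ∀ x, ENNReal.ofReal (f x) ^ q =
      ENNReal.ofReal (q*(q-1)) *
        ∫⁻ t in Set.Ioi (0:ℝ), ENNReal.ofReal (max (f x - t) 0 * t^(q-2)) := by
    intro x
    rw [layer q hq (f x) (hf0 x), ENNReal.ofReal_rpow_of_nonneg (hf0 x) (by linarith),
      ← ENNReal.ofReal_mul hqq.le]
    congr 1
    field_simp
    rw [mul_div_assoc, div_self (by linarith : q - 1 ≠ 0), mul_one]
  calc ∫⁻ x, ENNReal.ofReal (f x) ^ q
      = ∫⁻ x, ENNReal.ofReal (q*(q-1)) *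
          ∫⁻ t in Set.Ioi (0:ℝ), ENNReal.ofReal (max (f x - t) 0 * t^(q-2)) :=
        lintegral_congr h1
    _ = ENNReal.ofReal (q*(q-1)) * ∫⁻ x, ∫⁻ t in Set.Ioi (0:ℝ),
          ENNReal.ofReal (max (f x - t) 0 * t^(q-2)) :=
        lintegral_const_mul' _ _ ENNReal.ofReal_ne_top
    _ = ENNReal.ofReal (q*(q-1)) * ∫⁻ t in Set.Ioi (0:ℝ), ∫⁻ x,
          ENNReal.ofReal (max (f x - t) 0 * t^(q-2)) := by
        congr 1
        apply lintegral_lintegral_swap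
        apply Measurable.aemeasurable
        apply Measurable.ennreal_ofReal
        exact (((hfm.comp measurable_fst).sub measurable_snd).max measurable_const).mul
          (by fun_prop)
    _ = _ := by
        congr 1
        refine lintegral_congr fun t => ?_
        simp_rw [ENNReal.ofReal_mul (le_max_right _ 0)]
        exact lintegral_mul_const' _ _ ENNReal.ofReal_ne_top

/-- Comparison of concentrations of rearranged integrable functions implies
comparison of all `L^p` norms, `1 ≤ p ≤ ∞`. -/
theorem stmt2 (N : ℕ) (hN : 1 ≤ N)
    (f g : EuclideanSpace ℝ (Fin N) → ℝ)
    (hfi : Integrable f volume) (hgi : Integrable g volume)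
    (hf0 : ∀ x, 0 ≤ f x) (hg0 : ∀ x, 0 ≤ g x)
    (hfr : ∀ x y : EuclideanSpace ℝ (Fin N), ‖x‖ ≤ ‖y‖ → f y ≤ f x)
    (hgr : ∀ x y : EuclideanSpace ℝ (Fin N), ‖x‖ ≤ ‖y‖ → g y ≤ g x)
    (hconc : ∀ R > (0:ℝ),
      ∫ x in ball (0 : EuclideanSpace ℝ (Fin N)) R, f x ≤
        ∫ x in ball (0 : EuclideanSpace ℝ (Fin N)) R, g x) :
    ∀ p : ℝ≥0∞, 1 ≤ p → eLpNorm f p volume ≤ eLpNorm g p volume := by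
  haveI : Nonempty (Fin N) := ⟨⟨0, hN⟩⟩
  have hfm : Measurable f := radial_meas hN f hfr
  have hgm : Measurable g := radial_meas hN g hgr
  intro p hp
  by_cases hptop : p = ∞
  · -- p = ∞
    rw [hptop, eLpNorm_exponent_top, eLpNorm_exponent_top]
    set L := eLpNormEssSup g volume with hL
    have hmain : ∀ x : EuclideanSpace ℝ (Fin N), x ≠ 0 → ENNReal.ofReal (f x) ≤ L := by
      intro x hx
      have hr : 0 < ‖x‖ := norm_pos_iff.2 hx
      set V := volume (ball (0:EuclideanSpace ℝ (Fin N)) ‖x‖) with hV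
      have hV0 : V ≠ 0 := (measure_ball_pos _ _ hr).ne'
      have hVtop : V ≠ ∞ := measure_ball_lt_top.ne
      have step1 : ENNReal.ofReal (f x) * V ≤
          ∫⁻ y in ball (0:EuclideanSpace ℝ (Fin N)) ‖x‖, ENNReal.ofReal (f y) := by
        rw [← setLIntegral_const]
        refine setLIntegral_mono hfm.ennreal_ofReal fun y hy => ?_
        exact ENNReal.ofReal_le_ofReal (hfr y x (mem_ball_zero_iff.1 hy).le)
      have step2 : ∫⁻ y in ball (0:EuclideanSpace ℝ (Fin N)) ‖x‖, ENNReal.ofReal (f y) ≤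
          ∫⁻ y in ball (0:EuclideanSpace ℝ (Fin N)) ‖x‖, ENNReal.ofReal (g y) := by
        rw [← ofReal_integral_eq_lintegral_ofReal hfi.integrableOn
            ((ae_restrict_iff' measurableSet_ball).2 (ae_of_all _ fun y _ => hf0 y)),
          ← ofReal_integral_eq_lintegral_ofReal hgi.integrableOn
            ((ae_restrict_iff' measurableSet_ball).2 (ae_of_all _ fun y _ => hg0 y))]
        exact ENNReal.ofReal_le_ofReal (hconc _ hr)
      have step3 : ∫⁻ y in ball (0:EuclideanSpace ℝ (Fin N)) ‖x‖, ENNReal.ofReal (g y) ≤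
          L * V := by
        rw [← setLIntegral_const]
        apply lintegral_mono_ae
        filter_upwards [ae_restrict_of_ae (ae_le_eLpNormEssSup (f := g) (μ := volume))] with y hy
        rw [← Real.enorm_eq_ofReal (hg0 y)]
        exact hy
      exact (ENNReal.mul_le_mul_iff_left hV0 hVtop).1 ((step1.trans step2).trans step3)
    show essSup (fun x => ‖f x‖ₑ) volume ≤ L
    refine essSup_le_of_ae_le _ ?_
    filter_upwards [measure_eq_zero_iff_ae_notMem.mp (vol_zero hN)] with x hx
    rw [Real.enorm_eq_ofReal (hf0 x)]
    exact hmain x hx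
  · by_cases hp1 : p = 1
    · -- p = 1
      subst hp1
      have key : ∫ x, f x ≤ ∫ x, g x := by
        have hsm : ∀ n : ℕ, MeasurableSet (ball (0:EuclideanSpace ℝ (Fin N)) ((n:ℝ)+1)) :=
          fun n => measurableSet_ball
        have hmono : Monotone fun n : ℕ => ball (0:EuclideanSpace ℝ (Fin N)) ((n:ℝ)+1) :=
          fun m n h => ball_subset_ball (by exact_mod_cast add_le_add_left (Nat.cast_le.2 h) 1)
        have hU : ⋃ n : ℕ, ball (0:EuclideanSpace ℝ (Fin N)) ((n:ℝ)+1) = univ := by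
          ext x
          simp only [mem_iUnion, mem_ball_zero_iff, mem_univ, iff_true]
          obtain ⟨n, hn⟩ := exists_nat_gt ‖x‖
          exact ⟨n, by linarith⟩
        have h1 := tendsto_setIntegral_of_monotone hsm hmono (by rw [hU]; exact hfi.integrableOn)
        have h2 := tendsto_setIntegral_of_monotone hsm hmono (by rw [hU]; exact hgi.integrableOn)
        rw [hU, setIntegral_univ] at h1 h2
        exact le_of_tendsto_of_tendsto' h1 h2 fun n => hconc _ (by positivity)
      rw [eLpNorm_one_eq_lintegral_enorm, eLpNorm_one_eq_lintegral_enorm]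
      have e1 : ∫⁻ x, ‖f x‖ₑ = ENNReal.ofReal (∫ x, f x) := by
        rw [ofReal_integral_eq_lintegral_ofReal hfi (ae_of_all _ hf0)]
        exact lintegral_congr fun x => Real.enorm_eq_ofReal (hf0 x)
      have e2 : ∫⁻ x, ‖g x‖ₑ = ENNReal.ofReal (∫ x, g x) := by
        rw [ofReal_integral_eq_lintegral_ofReal hgi (ae_of_all _ hg0)]
        exact lintegral_congr fun x => Real.enorm_eq_ofReal (hg0 x)
      rw [e1, e2]
      exact ENNReal.ofReal_le_ofReal key
    · -- 1 < p < ∞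
      have hp0 : p ≠ 0 := by
        intro h; rw [h] at hp; exact absurd hp (by simp)
      have hplt : 1 < p := hp.lt_of_ne (Ne.symm hp1)
      set q := p.toReal with hqdef
      have hq : 1 < q := by
        have := (ENNReal.toReal_lt_toReal (by simp) hptop).2 hplt
        simpa using this
      rw [eLpNorm_eq_lintegral_rpow_enorm_toReal hp0 hptop, eLpNorm_eq_lintegral_rpow_enorm_toReal hp0 hptop]
      refine ENNReal.rpow_le_rpow ?_ (by positivity)
      have ef : ∫⁻ x, ‖f x‖ₑ ^ q = ∫⁻ x, ENNReal.ofReal (f x) ^ q :=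
        lintegral_congr fun x => by rw [Real.enorm_eq_ofReal (hf0 x)]
      have eg : ∫⁻ x, ‖g x‖ₑ ^ q = ∫⁻ x, ENNReal.ofReal (g x) ^ q :=
        lintegral_congr fun x => by rw [Real.enorm_eq_ofReal (hg0 x)]
      rw [ef, eg, rep f hf0 hfm q hq, rep g hg0 hgm q hq]
      refine mul_le_mul_right ?_ _
      apply lintegral_mono_ae
      filter_upwards [ae_restrict_mem measurableSet_Ioi] with t ht
      exact mul_le_mul_left (concA hN f g hfi hgi hf0 hg0 hfr hconc t ht) _
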